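/- (Score matching objective equivalence) Under regularity conditions, the expected squared score distance J(θ) = (1/2)·E_{t∼p*}[(ψ(t;θ) − ψ*(t))²] equals E_{t∼p*}[(1/2)·ψ(t;θ)² + ∂_t ψ(t;θ)] plus a constant independent of θ. -/

import Mathlib

open MeasureTheory Real Filter

/-- Score matching objective equivalence: under regularity conditions, the expected
squared score distance `J(θ) = (1/2) E_{p⋆}[(ψ(t;θ) - ψ⋆(t))²]` equals
`E_{p⋆}[(1/2) ψ(t;θ)² + ∂ₜ ψ(t;θ)]` plus a constant independent of `θ`. -/
theorem score_matching_objective_equivalence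
    {Θ : Type*} (pstar : ℝ → ℝ) (ψstar : ℝ → ℝ) (ψ : Θ → ℝ → ℝ)
    (hp_pos : ∀ t, 0 < pstar t)
    (hp_smooth : ContDiff ℝ 1 pstar)
    (hp_int : Integrable pstar) (hp_one : ∫ t, pstar t = 1)
    (hψstar : ∀ t, ψstar t = deriv (fun u => Real.log (pstar u)) t)
    (hfisher : Integrable (fun t => pstar t * ψstar t ^ 2))
    (hψ_smooth : ∀ θ, ContDiff ℝ 1 (ψ θ))
    (hψ_sq : ∀ θ, Integrable (fun t => pstar t * ψ θ t ^ 2))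
    (hψ_deriv : ∀ θ, Integrable (fun t => pstar t * deriv (ψ θ) t))
    (hcross : ∀ θ, Integrable (fun t => pstar t * (ψstar t * ψ θ t)))
    (hvanish_top : ∀ θ, Tendsto (fun t => pstar t * ψ θ t) atTop (nhds 0))
    (hvanish_bot : ∀ θ, Tendsto (fun t => pstar t * ψ θ t) atBot (nhds 0)) :
    ∃ C : ℝ, ∀ θ : Θ,
      (1 / 2) * ∫ t, pstar t * (ψ θ t - ψstar t) ^ 2
        = (∫ t, pstar t * ((1 / 2) * ψ θ t ^ 2 + deriv (ψ θ) t)) + C := by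
  have hp_diff : Differentiable ℝ pstar := hp_smooth.differentiable one_ne_zero
  have hpψstar : ∀ t, pstar t * ψstar t = deriv pstar t := by
    intro t
    rw [hψstar t, deriv.log (hp_diff t) (hp_pos t).ne']
    field_simp [(hp_pos t).ne']
  refine ⟨(1 / 2) * ∫ t, pstar t * ψstar t ^ 2, fun θ => ?_⟩
  have hψ_diff : Differentiable ℝ (ψ θ) := (hψ_smooth θ).differentiable one_ne_zero
  -- integration by parts: ∫ (p ψ* ψ + p ψ') = 0
  have hD : ∀ t, HasDerivAt (fun t => pstar t * ψ θ t)
      (pstar t * (ψstar t * ψ θ t) + pstar t * deriv (ψ θ) t) t := by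
    intro t
    have : HasDerivAt (fun t => pstar t * ψ θ t) (deriv pstar t * ψ θ t + pstar t * deriv (ψ θ) t) t :=
      ((hp_diff t).hasDerivAt).mul ((hψ_diff t).hasDerivAt)
    convert this using 1
    rw [← hpψstar t]; ring
  have hzero : (∫ t, (pstar t * (ψstar t * ψ θ t) + pstar t * deriv (ψ θ) t)) = 0 := by
    have := integral_of_hasDerivAt_of_tendsto hD ((hcross θ).add (hψ_deriv θ))
      (hvanish_bot θ) (hvanish_top θ)
    simpa using this
  rw [integral_add (hcross θ) (hψ_deriv θ)] at hzero
  -- expand the square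
  have e1 : (fun t => pstar t * (ψ θ t - ψstar t) ^ 2)
      = fun t => (pstar t * ψ θ t ^ 2 - 2 * (pstar t * (ψstar t * ψ θ t)))
        + pstar t * ψstar t ^ 2 := by
    funext t; ring
  have e2 : (fun t => pstar t * ((1 / 2) * ψ θ t ^ 2 + deriv (ψ θ) t))
      = fun t => (1 / 2) * (pstar t * ψ θ t ^ 2) + pstar t * deriv (ψ θ) t := by
    funext t; ring
  have iA : Integrable (fun t => pstar t * ψ θ t ^ 2 - 2 * (pstar t * (ψstar t * ψ θ t))) :=
    (hψ_sq θ).sub ((hcross θ).const_mul 2)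
  have iB : Integrable (fun t => 2 * (pstar t * (ψstar t * ψ θ t))) :=
    (hcross θ).const_mul 2
  have iC : Integrable (fun t => (1 / 2 : ℝ) * (pstar t * ψ θ t ^ 2)) :=
    (hψ_sq θ).const_mul _
  rw [e1, e2, integral_add iA hfisher, integral_sub (hψ_sq θ) iB,
    integral_add iC (hψ_deriv θ), integral_const_mul, integral_const_mul]
  linarith [hzero]
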